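/- The number of order ideals of the root poset of type A_{ℓ-1} (for ℓ ≥ 2) equals the ℓ-th Catalan number Cat_ℓ = (1/(ℓ+1)) · binom(2ℓ, ℓ). -/
import Mathlib

/-- The root poset of type `A_{ℓ-1}`, realized as the poset of intervals
`[i, j] ⊆ [ℓ-1]` ordered by inclusion: pairs `(i, j)` with `i ≤ j`, where
`(i, j) ≤ (i', j')` iff `i' ≤ i` and `j ≤ j'`. -/
def RootPosetA (ℓ : ℕ) : Type :=
  {p : (Fin (ℓ - 1))ᵒᵈ × Fin (ℓ - 1) // OrderDual.ofDual p.1 ≤ p.2}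

instance (ℓ : ℕ) : PartialOrder (RootPosetA ℓ) :=
  Subtype.partialOrder _



def CatSeq (n : ℕ) : Type :=
  {c : Fin n → ℕ // Monotone c ∧ ∀ i : Fin n, (i : ℕ) ≤ c i ∧ c i + 1 ≤ n}

lemma CatSeq.mono {n : ℕ} (c : CatSeq n) {a b : ℕ} (ha : a < n) (hb : b < n) (h : a ≤ b) :
    c.1 ⟨a, ha⟩ ≤ c.1 ⟨b, hb⟩ := c.2.1 (Fin.mk_le_mk.mpr h)

lemma CatSeq.le_self {n : ℕ} (c : CatSeq n) (a : ℕ) (ha : a < n) : a ≤ c.1 ⟨a, ha⟩ := by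
  simpa using (c.2.2 ⟨a, ha⟩).1

lemma CatSeq.lt_n {n : ℕ} (c : CatSeq n) (a : ℕ) (ha : a < n) : c.1 ⟨a, ha⟩ + 1 ≤ n :=
  (c.2.2 ⟨a, ha⟩).2

instance catSeqFinite (n : ℕ) : Finite (CatSeq n) := by
  have : Function.Injective (fun c : CatSeq n => fun i : Fin n =>
      (⟨c.1 i, by have := (c.2.2 i).2; omega⟩ : Fin n)) := by
    intro c c' h
    apply Subtype.ext
    funext i
    exact congrArg Fin.val (congrFun h i)
  exact Finite.of_injective _ this

instance : Unique (CatSeq 0) := by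
  refine ⟨⟨⟨fun i => i.elim0, ⟨fun i => i.elim0, fun i => i.elim0⟩⟩⟩, ?_⟩
  rintro ⟨c, hc⟩
  apply Subtype.ext
  funext i
  exact i.elim0

def glueFun (n : ℕ) (k : Fin (n + 1)) (p : CatSeq (k : ℕ)) (q : CatSeq (n - (k : ℕ))) :
    Fin (n + 1) → ℕ := fun i =>
  if h1 : (i : ℕ) < (k : ℕ) then p.1 ⟨i, h1⟩ + 1
  else if h2 : (i : ℕ) = (k : ℕ) then (k : ℕ)
  else q.1 ⟨(i : ℕ) - ((k : ℕ) + 1), by have := i.isLt; have := k.isLt; omega⟩ + ((k : ℕ) + 1)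

lemma glueFun_apply_lt (n : ℕ) (k : Fin (n + 1)) (p : CatSeq (k : ℕ)) (q : CatSeq (n - (k : ℕ)))
    (i : Fin (n + 1)) (h : (i : ℕ) < (k : ℕ)) :
    glueFun n k p q i = p.1 ⟨i, h⟩ + 1 := dif_pos h

lemma glueFun_apply_eq (n : ℕ) (k : Fin (n + 1)) (p : CatSeq (k : ℕ)) (q : CatSeq (n - (k : ℕ)))
    (i : Fin (n + 1)) (h : (i : ℕ) = (k : ℕ)) :
    glueFun n k p q i = (k : ℕ) := by
  unfold glueFun
  rw [dif_neg (by omega), dif_pos h]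

lemma glueFun_apply_gt (n : ℕ) (k : Fin (n + 1)) (p : CatSeq (k : ℕ)) (q : CatSeq (n - (k : ℕ)))
    (i : Fin (n + 1)) (h : (k : ℕ) < (i : ℕ)) (h' : (i : ℕ) - ((k : ℕ) + 1) < n - (k : ℕ)) :
    glueFun n k p q i = q.1 ⟨(i : ℕ) - ((k : ℕ) + 1), h'⟩ + ((k : ℕ) + 1) := by
  unfold glueFun
  rw [dif_neg (by omega), dif_neg (by omega)]

def glueCS (n : ℕ) (x : Σ k : Fin (n + 1), CatSeq (k : ℕ) × CatSeq (n - (k : ℕ))) :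
    CatSeq (n + 1) := by
  obtain ⟨k, p, q⟩ := x
  refine ⟨glueFun n k p q, ?_, ?_⟩
  · intro i j hij
    have hv : (i : ℕ) ≤ (j : ℕ) := hij
    have hik := i.isLt
    have hjk := j.isLt
    unfold glueFun
    split_ifs with h1i h1j h2j h2i h1j' h2j' h1j'' h2j''
    · have := p.mono h1i h1j hv
      omega
    · have := p.lt_n (i : ℕ) h1i
      omega
    · have := p.lt_n (i : ℕ) h1i
      omega
    · omega
    · omega
    · omega
    · omega
    · omega
    · have hi' : (i : ℕ) - ((k : ℕ) + 1) < n - (k : ℕ) := by omega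
      have hj' : (j : ℕ) - ((k : ℕ) + 1) < n - (k : ℕ) := by omega
      have := q.mono hi' hj' (by omega)
      omega
  · intro i
    have hk := k.isLt
    have hi := i.isLt
    unfold glueFun
    split_ifs with h1 h2
    · have := p.le_self (i : ℕ) h1
      have := p.lt_n (i : ℕ) h1
      omega
    · omega
    · have h3 : (i : ℕ) - ((k : ℕ) + 1) < n - (k : ℕ) := by omega
      have := q.le_self _ h3
      have := q.lt_n _ h3
      omega

lemma glueCS_val (n : ℕ) (x : Σ k : Fin (n + 1), CatSeq (k : ℕ) × CatSeq (n - (k : ℕ))) :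
    (glueCS n x).1 = glueFun n x.1 x.2.1 x.2.2 := by
  obtain ⟨k, p, q⟩ := x
  rfl

lemma glueCS_injective (n : ℕ) : Function.Injective (glueCS n) := by
  rintro ⟨k, p, q⟩ ⟨k', p', q'⟩ h
  have hfun : glueFun n k p q = glueFun n k' p' q' := by
    have := congrArg Subtype.val h
    rwa [glueCS_val, glueCS_val] at this
  -- first, k = k'
  have hkk : k = k' := by
    rcases Nat.lt_trichotomy (k : ℕ) (k' : ℕ) with hlt | heq | hgt
    · exfalso
      have h1 := congrFun hfun k
      rw [glueFun_apply_eq n k p q k rfl, glueFun_apply_lt n k' p' q' k hlt] at h1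
      have := p'.le_self (k : ℕ) hlt
      omega
    · exact Fin.ext heq
    · exfalso
      have h1 := congrFun hfun k'
      rw [glueFun_apply_eq n k' p' q' k' rfl, glueFun_apply_lt n k p q k' hgt] at h1
      have := p.le_self (k' : ℕ) hgt
      omega
  subst hkk
  have hp : p = p' := by
    apply Subtype.ext
    funext i
    have hik : (i : ℕ) < (k : ℕ) := i.isLt
    have hin : (i : ℕ) < n + 1 := by have := k.isLt; omega
    have h1 := congrFun hfun ⟨(i : ℕ), hin⟩
    rw [glueFun_apply_lt n k p q _ hik, glueFun_apply_lt n k p' q' _ hik] at h1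
    have e : (⟨(i : ℕ), hik⟩ : Fin (k : ℕ)) = i := Fin.eta i _
    rw [e] at h1
    omega
  have hq : q = q' := by
    apply Subtype.ext
    funext j
    have hjk : (j : ℕ) < n - (k : ℕ) := j.isLt
    have hin : (k : ℕ) + 1 + (j : ℕ) < n + 1 := by omega
    have h1 := congrFun hfun ⟨(k : ℕ) + 1 + (j : ℕ), hin⟩
    have hgt : (k : ℕ) < ((⟨(k : ℕ) + 1 + (j : ℕ), hin⟩ : Fin (n + 1)) : ℕ) := by
      simp only [Fin.val_mk]; omega
    have h' : ((⟨(k : ℕ) + 1 + (j : ℕ), hin⟩ : Fin (n + 1)) : ℕ) - ((k : ℕ) + 1) < n - (k : ℕ) := by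
      simp only [Fin.val_mk]; omega
    rw [glueFun_apply_gt n k p q _ hgt h', glueFun_apply_gt n k p' q' _ hgt h'] at h1
    have e : (⟨((⟨(k : ℕ) + 1 + (j : ℕ), hin⟩ : Fin (n + 1)) : ℕ) - ((k : ℕ) + 1), h'⟩ :
        Fin (n - (k : ℕ))) = j := by
      apply Fin.ext
      simp
    rw [e] at h1
    omega
  rw [hp, hq]

noncomputable def sliceP (n K : ℕ) (c : CatSeq (n + 1)) (hKn : K < n + 1)
    (hcK : c.1 ⟨K, hKn⟩ = K)
    (hbelow : ∀ m (h : m < n + 1), m < K → m + 1 ≤ c.1 ⟨m, h⟩) : CatSeq K :=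
  ⟨fun i => c.1 ⟨i, by have := i.isLt; omega⟩ - 1,
   fun a b hab => by
    have h1 : (a : ℕ) < n + 1 := by have := a.isLt; omega
    have h2 : (b : ℕ) < n + 1 := by have := b.isLt; omega
    have h3 := c.mono h1 h2 (show (a : ℕ) ≤ b from hab)
    simp only
    omega,
   fun i => by
    have h1 : (i : ℕ) < n + 1 := by have := i.isLt; omega
    have hik : (i : ℕ) < K := i.isLt
    have hb := hbelow (i : ℕ) h1 hik
    have hle := c.mono h1 hKn (by omega)
    simp only
    omega⟩

noncomputable def sliceQ (n K : ℕ) (c : CatSeq (n + 1)) (hKn : K < n + 1) :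
    CatSeq (n - K) :=
  ⟨fun j => c.1 ⟨K + 1 + j, by have := j.isLt; omega⟩ - (K + 1),
   fun a b hab => by
    have h1 : K + 1 + (a : ℕ) < n + 1 := by have := a.isLt; omega
    have h2 : K + 1 + (b : ℕ) < n + 1 := by have := b.isLt; omega
    have h3 := c.mono h1 h2 (by have : (a : ℕ) ≤ b := hab; omega)
    simp only
    omega,
   fun j => by
    have h1 : K + 1 + (j : ℕ) < n + 1 := by have := j.isLt; omega
    have hjk : (j : ℕ) < n - K := j.isLt
    have hb := c.le_self (K + 1 + (j : ℕ)) h1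
    have hn := c.lt_n (K + 1 + (j : ℕ)) h1
    simp only
    omega⟩

lemma glueCS_surjective (n : ℕ) : Function.Surjective (glueCS n) := by
  classical
  intro c
  have hex : ∃ m, ∃ h : m < n + 1, c.1 ⟨m, h⟩ = m := by
    refine ⟨n, by omega, ?_⟩
    have h1 := c.le_self n (by omega)
    have h2 := c.lt_n n (by omega)
    omega
  obtain ⟨K, hKn, hcK, hmin⟩ :
      ∃ K, ∃ h : K < n + 1, c.1 ⟨K, h⟩ = K ∧
        ∀ m (hm : m < n + 1), m < K → c.1 ⟨m, hm⟩ ≠ m := by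
    obtain ⟨hKn, hcK⟩ := Nat.find_spec hex
    refine ⟨Nat.find hex, hKn, hcK, ?_⟩
    intro m hm hmK
    have h2 := Nat.find_min hex hmK
    push_neg at h2
    exact h2 hm
  clear hex
  have hbelow : ∀ m (h : m < n + 1), m < K → m + 1 ≤ c.1 ⟨m, h⟩ := by
    intro m h hm
    have h1 := c.le_self m h
    have := hmin m h hm
    omega
  refine ⟨⟨⟨K, hKn⟩, sliceP n K c hKn hcK hbelow, sliceQ n K c hKn⟩, ?_⟩
  apply Subtype.ext
  rw [glueCS_val]
  funext i
  have hi := i.isLt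
  rcases Nat.lt_trichotomy (i : ℕ) K with hlt | heq | hgt
  · rw [glueFun_apply_lt _ _ _ _ i hlt]
    have hb := hbelow (i : ℕ) hi hlt
    rw [show (⟨(i : ℕ), hi⟩ : Fin (n + 1)) = i from Fin.eta i hi] at hb
    show c.1 ⟨(i : ℕ), by omega⟩ - 1 + 1 = c.1 i
    rw [show (⟨(i : ℕ), by omega⟩ : Fin (n + 1)) = i from Fin.eta i hi]
    omega
  · rw [glueFun_apply_eq _ _ _ _ i heq]
    have e : i = (⟨K, hKn⟩ : Fin (n + 1)) := Fin.ext heq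
    rw [e]
    exact hcK.symm
  · have h' : (i : ℕ) - (K + 1) < n - K := by omega
    rw [glueFun_apply_gt _ _ _ _ i hgt h']
    have hle := c.le_self (i : ℕ) hi
    rw [show (⟨(i : ℕ), hi⟩ : Fin (n + 1)) = i from Fin.eta i hi] at hle
    show c.1 ⟨K + 1 + ((i : ℕ) - (K + 1)), by omega⟩ - (K + 1) + (K + 1) = c.1 i
    rw [show (⟨K + 1 + ((i : ℕ) - (K + 1)), by omega⟩ : Fin (n + 1)) = i from
      Fin.ext (by simp only [Fin.val_mk]; omega)]
    omega

theorem card_catSeq : ∀ n : ℕ, Nat.card (CatSeq n) = catalan n := by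
  intro n
  induction n using Nat.strong_induction_on with
  | _ n ih =>
    match n with
    | 0 => rw [Nat.card_unique, catalan_zero]
    | Nat.succ m =>
      have hbij : Function.Bijective (glueCS m) := ⟨glueCS_injective m, glueCS_surjective m⟩
      rw [← Nat.card_eq_of_bijective _ hbij]
      haveI : ∀ m' : ℕ, Fintype (CatSeq m') := fun _ => Fintype.ofFinite _
      rw [Nat.card_eq_fintype_card, Fintype.card_sigma, catalan_succ]
      apply Finset.sum_congr rfl
      intro k _
      rw [Fintype.card_prod, ← Nat.card_eq_fintype_card, ← Nat.card_eq_fintype_card,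
        ih (k : ℕ) (by have := k.isLt; omega), ih (m - (k : ℕ)) (by omega)]

section Bridge

variable {n : ℕ}

/-- Convenient constructor for elements of the root poset. -/
def RPmk (i j : Fin n) (h : i ≤ j) : RootPosetA (n + 1) := ⟨(OrderDual.toDual i, j), h⟩

/-- The lower set associated to a Catalan sequence. -/
def idealOf (c : CatSeq (n + 1)) : Set (RootPosetA (n + 1)) :=
  {p | (p.1.2 : ℕ) < c.1 (Fin.castSucc (OrderDual.ofDual p.1.1))}

lemma idealOf_isLowerSet (c : CatSeq (n + 1)) : IsLowerSet (idealOf c) := by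
  intro a b hba ha
  have h1 : OrderDual.ofDual a.1.1 ≤ OrderDual.ofDual b.1.1 := hba.1
  have h2 : (b.1.2 : ℕ) ≤ (a.1.2 : ℕ) := hba.2
  have hmono := c.2.1 (show Fin.castSucc (OrderDual.ofDual a.1.1) ≤
    Fin.castSucc (OrderDual.ofDual b.1.1) from Fin.castSucc_le_castSucc_iff.mpr h1)
  have ha' : (a.1.2 : ℕ) < c.1 (Fin.castSucc (OrderDual.ofDual a.1.1)) := ha
  show (b.1.2 : ℕ) < c.1 (Fin.castSucc (OrderDual.ofDual b.1.1))
  omega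

lemma mem_idealOf (c : CatSeq (n + 1)) (i j : Fin n) (h : i ≤ j) :
    RPmk i j h ∈ idealOf c ↔ (j : ℕ) < c.1 (Fin.castSucc i) := Iff.rfl

open Classical in
/-- The row-bound function of a lower set. -/
noncomputable def rowEnd (I : Set (RootPosetA (n + 1))) (i : Fin n) : ℕ :=
  (i : ℕ) ⊔ (Finset.univ.filter (fun j : Fin n =>
      ∃ hj : i ≤ j, RPmk i j hj ∈ I)).sup (fun j => (j : ℕ) + 1)

lemma rowEnd_mem {I : Set (RootPosetA (n + 1))} (hI : IsLowerSet I) (i j : Fin n) (h : i ≤ j) :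
    RPmk i j h ∈ I ↔ (j : ℕ) < rowEnd I i := by
  classical
  constructor
  · intro hm
    have hj : j ∈ Finset.univ.filter (fun j : Fin n => ∃ hj : i ≤ j, RPmk i j hj ∈ I) := by
      simp only [Finset.mem_filter, Finset.mem_univ, true_and]
      exact ⟨h, hm⟩
    have := Finset.le_sup (f := fun j : Fin n => (j : ℕ) + 1) hj
    have h2 : (j : ℕ) + 1 ≤ rowEnd I i := le_trans this le_sup_right
    omega
  · intro hlt
    rcases lt_sup_iff.mp hlt with hc | hc
    · exact absurd (show (i : ℕ) ≤ (j : ℕ) from h) (by omega)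
    · rcases Finset.lt_sup_iff.mp hc with ⟨j', hj', hlt'⟩
      simp only [Finset.mem_filter, Finset.mem_univ, true_and] at hj'
      obtain ⟨hij', hm'⟩ := hj'
      have hle : RPmk i j h ≤ RPmk i j' hij' := ⟨le_refl i, by
        show j ≤ j'
        exact Fin.le_def.mpr (by omega)⟩
      exact hI hle hm'

lemma rowEnd_le {I : Set (RootPosetA (n + 1))} (i : Fin n) : rowEnd I i ≤ n := by
  classical
  apply sup_le
  · omega
  · apply Finset.sup_le
    intro j _
    have := j.isLt
    omega

lemma le_rowEnd {I : Set (RootPosetA (n + 1))} (i : Fin n) : (i : ℕ) ≤ rowEnd I i := le_sup_left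

lemma rowEnd_mono {I : Set (RootPosetA (n + 1))} (hI : IsLowerSet I) (i i' : Fin n)
    (h : i ≤ i') : rowEnd I i ≤ rowEnd I i' := by
  classical
  apply sup_le
  · exact le_trans (le_trans h (le_rowEnd i')) le_rfl
  · apply Finset.sup_le
    intro j hj
    simp only [Finset.mem_filter, Finset.mem_univ, true_and] at hj
    obtain ⟨hij, hm⟩ := hj
    rcases le_or_gt i' j with hij' | hij'
    · have hle : RPmk i' j hij' ≤ RPmk i j hij := ⟨h, le_refl j⟩
      have := (rowEnd_mem hI i' j hij').mp (hI hle hm)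
      omega
    · have : (j : ℕ) < (i' : ℕ) := hij'
      have := le_rowEnd (I := I) i'
      omega

/-- The Catalan sequence associated to a lower set. -/
noncomputable def seqOf (I : Set (RootPosetA (n + 1))) (hI : IsLowerSet I) : CatSeq (n + 1) := by
  refine ⟨fun t => if h : (t : ℕ) < n then rowEnd I ⟨(t : ℕ), h⟩ else n, ?_, ?_⟩
  · intro t t' htt
    have hv : (t : ℕ) ≤ (t' : ℕ) := htt
    dsimp only
    split_ifs with h1 h2 h3
    · exact rowEnd_mono hI _ _ (Fin.mk_le_mk.mpr hv)
    · exact rowEnd_le _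
    · omega
    · exact le_rfl
  · intro t
    have ht := t.isLt
    dsimp only
    split_ifs with h1
    · have := le_rowEnd (I := I) ⟨(t : ℕ), h1⟩
      have := rowEnd_le (I := I) ⟨(t : ℕ), h1⟩
      simp only [Fin.val_mk] at *
      omega
    · omega

lemma seqOf_castSucc (I : Set (RootPosetA (n + 1))) (hI : IsLowerSet I) (i : Fin n) :
    (seqOf I hI).1 (Fin.castSucc i) = rowEnd I i := by
  have h : ((Fin.castSucc i : Fin (n + 1)) : ℕ) < n := by simp
  show (if h : ((Fin.castSucc i : Fin (n + 1)) : ℕ) < n then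
      rowEnd I ⟨((Fin.castSucc i : Fin (n + 1)) : ℕ), h⟩ else n) = rowEnd I i
  rw [dif_pos h]
  exact congrArg (rowEnd I) (Fin.ext (by simp))

end Bridge


section Bridge2
variable {n : ℕ}

noncomputable def idealEquivFun (c : CatSeq (n + 1)) :
    {I : Set (RootPosetA (n + 1)) // IsLowerSet I} := ⟨idealOf c, idealOf_isLowerSet c⟩

lemma idealOf_le {c c' : CatSeq (n + 1)} (h : idealOf c = idealOf c') (t : Fin (n + 1))
    (ht : (t : ℕ) < n) : c.1 t ≤ c'.1 t := by
  by_contra hlt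
  push_neg at hlt
  have hb1 := (c.2.2 t).2
  have hb2 := (c'.2.2 t).1
  have hjn : c'.1 t < n := by omega
  set i : Fin n := ⟨(t : ℕ), ht⟩ with hi
  set j : Fin n := ⟨c'.1 t, hjn⟩ with hj
  have hij : i ≤ j := Fin.mk_le_mk.mpr (by omega)
  have e : Fin.castSucc i = t := Fin.ext (by simp [hi])
  have hmem : RPmk i j hij ∈ idealOf c := by
    show (j : ℕ) < c.1 (Fin.castSucc i)
    rw [e]
    simp only [hj, Fin.val_mk]
    omega
  rw [h] at hmem
  have : (j : ℕ) < c'.1 (Fin.castSucc i) := hmem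
  rw [e] at this
  simp only [hj, Fin.val_mk] at this
  omega

lemma idealEquivFun_injective : Function.Injective (idealEquivFun (n := n)) := by
  intro c c' h
  have hset : idealOf c = idealOf c' := congrArg Subtype.val h
  apply Subtype.ext
  funext t
  rcases lt_or_ge (t : ℕ) n with ht | ht
  · exact le_antisymm (idealOf_le hset t ht) (idealOf_le hset.symm t ht)
  · have h1 := (c.2.2 t).1
    have h2 := (c.2.2 t).2
    have h1' := (c'.2.2 t).1
    have h2' := (c'.2.2 t).2
    have := t.isLt
    omega

lemma idealEquivFun_surjective : Function.Surjective (idealEquivFun (n := n)) := by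
  rintro ⟨I, hI⟩
  refine ⟨seqOf I hI, ?_⟩
  apply Subtype.ext
  show idealOf (seqOf I hI) = I
  ext p
  obtain ⟨⟨d, j⟩, hp⟩ := p
  show ((j : ℕ) < (seqOf I hI).1 (Fin.castSucc (OrderDual.ofDual d))) ↔ _
  rw [seqOf_castSucc]
  exact (rowEnd_mem hI (OrderDual.ofDual d) j hp).symm

lemma card_ideals_eq (n : ℕ) :
    Nat.card {I : Set (RootPosetA (n + 1)) // IsLowerSet I} = catalan (n + 1) := by
  rw [← Nat.card_eq_of_bijective (idealEquivFun (n := n))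
    ⟨idealEquivFun_injective, idealEquivFun_surjective⟩]
  exact card_catSeq (n + 1)

end Bridge2

/-- The number of order ideals (downward-closed subsets) of the root poset of type
`A_{ℓ-1}` (for `ℓ ≥ 2`) equals the `ℓ`-th Catalan number
`Cat ℓ = (1 / (ℓ + 1)) * binom (2ℓ) ℓ`. -/
theorem card_ideals_rootPosetA (ℓ : ℕ) (hℓ : 2 ≤ ℓ) :
    Nat.card {I : Set (RootPosetA ℓ) // IsLowerSet I} = catalan ℓ ∧
    catalan ℓ = (2 * ℓ).choose ℓ / (ℓ + 1) := by
  constructor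
  · obtain ⟨m, rfl⟩ : ∃ m, ℓ = m + 2 := ⟨ℓ - 2, by omega⟩
    exact card_ideals_eq (m + 1)
  · exact catalan_eq_centralBinom_div ℓ
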